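/- Call a PBR α on (X,Y) pure if every edge of α has one endpoint in the domain copy of X and the other endpoint in the codomain copy of Y (in either order). If α is a pure PBR on (X,Y) and β is a pure PBR on (Y,Z), then the composition β∘α is a pure PBR on (X,Z). Together with the fact that each identity ε_X is pure, pure PBRs form a subcategory of the category of PBRs. -/

import Mathlib

namespace PBRPaper

/-- A partitioned binary relation (PBR) on `(X, Y)`: a binary relation on
the disjoint union `X ⊕ Y`. -/
abbrev PBR (X Y : Type) : Type := Set ((X ⊕ Y) × (X ⊕ Y))

variable {X Y Z : Type}

/-- The inclusion of `X ⊕ Y` into `X ⊕ Y ⊕ Z`. -/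
def ι₁ : X ⊕ Y → X ⊕ Y ⊕ Z := Sum.elim Sum.inl fun y => Sum.inr (Sum.inl y)

/-- The inclusion of `Y ⊕ Z` into `X ⊕ Y ⊕ Z`. -/
def ι₂ : Y ⊕ Z → X ⊕ Y ⊕ Z :=
  Sum.elim (fun y => Sum.inr (Sum.inl y)) fun z => Sum.inr (Sum.inr z)

/-- The inclusion of `X ⊕ Z` into `X ⊕ Y ⊕ Z`. -/
def ι₀ : X ⊕ Z → X ⊕ Y ⊕ Z := Sum.elim Sum.inl fun z => Sum.inr (Sum.inr z)

/-- Labeled edges in the ambient `X ⊕ Y ⊕ Z`: label `false` means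
"an edge of `α`", label `true` means "an edge of `β`". -/
def EdgeMem (α : PBR X Y) (β : PBR Y Z)
    (e : Bool × (X ⊕ Y ⊕ Z) × (X ⊕ Y ⊕ Z)) : Prop :=
  if e.1 then ∃ p ∈ β, ι₂ p.1 = e.2.1 ∧ ι₂ p.2 = e.2.2
  else ∃ p ∈ α, ι₁ p.1 = e.2.1 ∧ ι₁ p.2 = e.2.2

/-- An `(α,β)`-connected sequence: a nonempty list of labeled edges of `α`/`β`,
no two successive edges from the same PBR, endpoints matching up. -/
def IsConnSeq (α : PBR X Y) (β : PBR Y Z)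
    (L : List (Bool × (X ⊕ Y ⊕ Z) × (X ⊕ Y ⊕ Z))) : Prop :=
  L ≠ [] ∧ (∀ e ∈ L, EdgeMem α β e) ∧
    L.Chain' fun e f => e.1 ≠ f.1 ∧ e.2.2 = f.2.1

/-- `L` is an `(α,β)`-connected sequence connecting `a` to `b`. -/
def ConnectsVia (α : PBR X Y) (β : PBR Y Z)
    (L : List (Bool × (X ⊕ Y ⊕ Z) × (X ⊕ Y ⊕ Z))) (a b : X ⊕ Z) : Prop :=
  IsConnSeq α β L ∧ L.head?.map (fun e => e.2.1) = some (ι₀ a) ∧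
    L.getLast?.map (fun e => e.2.2) = some (ι₀ b)

/-- Composition of partitioned binary relations. -/
def comp (β : PBR Y Z) (α : PBR X Y) : PBR X Z :=
  {p | ∃ L, ConnectsVia α β L p.1 p.2}

/-- The identity PBR `ε_X`, consisting of all edges `(x^(d), x^(c))`
and `(x^(c), x^(d))`. -/
def eps (X : Type) : PBR X X :=
  {p | ∃ x : X, p = (Sum.inl x, Sum.inr x) ∨ p = (Sum.inr x, Sum.inl x)}

/-- A labeled edge is `(α,β)`-frothy if it is an edge of the corresponding PBR
occurring in no `(α,β)`-connected sequence connecting two elements of `X ⊕ Z`. -/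
def IsFrothy (α : PBR X Y) (β : PBR Y Z)
    (e : Bool × (X ⊕ Y ⊕ Z) × (X ⊕ Y ⊕ Z)) : Prop :=
  EdgeMem α β e ∧ ∀ L a b, ConnectsVia α β L a b → e ∉ L

/-- An `(α,β)`-frothy cycle. -/
def IsFrothyCycle (α : PBR X Y) (β : PBR Y Z)
    (L : List (Bool × (X ⊕ Y ⊕ Z) × (X ⊕ Y ⊕ Z))) : Prop :=
  IsConnSeq α β L ∧ 2 ≤ L.length ∧
    L.getLast?.map (fun e => e.2.2) = L.head?.map (fun e => e.2.1) ∧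
    L.head?.map (fun e => e.1) ≠ L.getLast?.map (fun e => e.1) ∧
    ∀ e ∈ L, IsFrothy α β e

/-- The type of `(α,β)`-frothy cycles. -/
def FrothyCycles (α : PBR X Y) (β : PBR Y Z) :=
  {L : List (Bool × (X ⊕ Y ⊕ Z) × (X ⊕ Y ⊕ Z)) // IsFrothyCycle α β L}

/-- `𝔣((α,β))`: the number of equivalence classes of `(α,β)`-frothy cycles,
where the equivalence is generated by elementary equivalence (sharing a common
edge of the same PBR); note that naive equivalence (cyclic permutation) is
subsumed, since a cycle and any of its cyclic permutations share all edges. -/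
noncomputable def fPBR (α : PBR X Y) (β : PBR Y Z) : ℕ :=
  Nat.card (Quot fun L L' : FrothyCycles α β => ∃ e, e ∈ L.1 ∧ e ∈ L'.1)

variable {X Y : Type} in
/-- A PBR is pure if every edge has one endpoint in the domain copy of `X` and
the other in the codomain copy of `Y` (in either order). -/
def IsPure (α : PBR X Y) : Prop :=
  ∀ p ∈ α, (∃ (x : X) (y : Y), p = (Sum.inl x, Sum.inr y)) ∨
    ∃ (y : Y) (x : X), p = (Sum.inr y, Sum.inl x)

/-- The composition of pure PBRs is pure, and each identity `ε_X` is pure;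
hence pure PBRs form a subcategory of the category of PBRs. -/
theorem pure_subcategory :
    (∀ (X Y Z : Type) [Fintype X] [Fintype Y] [Fintype Z]
      (α : PBR X Y) (β : PBR Y Z),
      IsPure α → IsPure β → IsPure (comp β α)) ∧
    (∀ (X : Type) [Fintype X], IsPure (eps X)) := by
  constructor
  · intro X Y Z _ _ _ α β hα hβ p hp
    obtain ⟨L, ⟨hne, hmem, hchain⟩, hhead, hlast⟩ := hp
    match L, hne with
    | (⟨b, s, t⟩ :: L'), _ =>
    simp only [List.head?_cons, Option.map_some] at hhead
    have hs : s = ι₀ p.1 := by exact Option.some.inj hhead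
    have he := hmem ⟨b, s, t⟩ List.mem_cons_self
    cases b with
    | false =>
      simp only [EdgeMem, if_neg Bool.false_ne_true] at he
      obtain ⟨q, hq, h1, h2⟩ := he
      rcases hα q hq with ⟨x, y, rfl⟩ | ⟨y, x, rfl⟩
      · -- q = (inl x, inr y) : s = inl x, t = inr (inl y)
        simp only [ι₁, Sum.elim_inl, Sum.elim_inr] at h1 h2
        have hp1 : p.1 = Sum.inl x := by
          rcases hp1 : p.1 with x' | z' <;> rw [hp1] at hs <;>
            simp [ι₀, ← h1] at hs ⊢ <;> simp [hs]
        rcases L' with _ | ⟨⟨b2, s2, t2⟩, L''⟩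
        · exfalso
          simp only [List.getLast?_singleton, Option.map_some] at hlast
          have := Option.some.inj hlast
          rcases hp2 : p.2 with x' | z' <;> rw [hp2] at this <;>
            simp [ι₀, ← h2] at this
        · rw [List.Chain', List.isChain_cons_cons] at hchain
          obtain ⟨⟨hb2, hc2⟩, hchain'⟩ := hchain
          replace hc2 : t = s2 := hc2
          have hb2' : b2 = true := by
            cases b2 <;> simp_all
          subst hb2'
          have hf := hmem ⟨true, s2, t2⟩ (by simp)
          simp only [EdgeMem, if_pos rfl] at hf
          obtain ⟨q', hq', h1', h2'⟩ := hf
          rcases hβ q' hq' with ⟨y', z, rfl⟩ | ⟨z, y', rfl⟩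
          · -- q' = (inl y', inr z) : s2 = inr (inl y'), t2 = inr (inr z)
            simp only [ι₂, Sum.elim_inl, Sum.elim_inr] at h1' h2'
            rcases L'' with _ | ⟨⟨b3, s3, t3⟩, L3⟩
            · simp only [List.getLast?_cons_cons, List.getLast?_singleton,
                Option.map_some] at hlast
              have hh := Option.some.inj hlast
              have hp2 : p.2 = Sum.inr z := by
                rcases hp2 : p.2 with x' | z' <;> rw [hp2] at hh <;>
                  simp [ι₀, ← h2'] at hh ⊢ <;> simp [hh]
              exact Or.inl ⟨x, z, Prod.ext hp1 hp2⟩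
            · exfalso
              rw [List.isChain_cons_cons] at hchain'
              obtain ⟨⟨hb3, hc3⟩, _⟩ := hchain'
              replace hc3 : t2 = s3 := hc3
              have hb3' : b3 = false := by cases b3 <;> simp_all
              subst hb3'
              have hg := hmem ⟨false, s3, t3⟩ (by simp)
              simp only [EdgeMem, if_neg Bool.false_ne_true] at hg
              obtain ⟨q'', hq'', h1'', _⟩ := hg
              rw [← hc3, ← h2'] at h1''
              obtain ⟨a, b⟩ := q''
              rcases a with x'' | y'' <;> simp [ι₁] at h1''
          · -- q' = (inr z, inl y') : s2 = inr (inr z), but s2 = t = inr (inl y)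
            exfalso
            simp only [ι₂, Sum.elim_inr] at h1'
            rw [← hc2, ← h2] at h1'
            simp at h1'
      · -- q = (inr y, inl x) : s = inr (inl y), impossible since s = ι₀ p.1
        exfalso
        simp only [ι₁, Sum.elim_inr] at h1
        rcases hp1 : p.1 with x' | z' <;> rw [hp1] at hs <;>
          simp [ι₀, ← h1] at hs
    | true =>
      simp only [EdgeMem, if_pos rfl] at he
      obtain ⟨q, hq, h1, h2⟩ := he
      rcases hβ q hq with ⟨y, z, rfl⟩ | ⟨z, y, rfl⟩
      · -- q = (inl y, inr z) : s = inr (inl y), impossible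
        exfalso
        simp only [ι₂, Sum.elim_inl] at h1
        rcases hp1 : p.1 with x' | z' <;> rw [hp1] at hs <;>
          simp [ι₀, ← h1] at hs
      · -- q = (inr z, inl y) : s = inr (inr z), t = inr (inl y)
        simp only [ι₂, Sum.elim_inl, Sum.elim_inr] at h1 h2
        have hp1 : p.1 = Sum.inr z := by
          rcases hp1 : p.1 with x' | z' <;> rw [hp1] at hs <;>
            simp [ι₀, ← h1] at hs ⊢ <;> simp [hs]
        rcases L' with _ | ⟨⟨b2, s2, t2⟩, L''⟩
        · exfalso
          simp only [List.getLast?_singleton, Option.map_some] at hlast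
          have := Option.some.inj hlast
          rcases hp2 : p.2 with x' | z' <;> rw [hp2] at this <;>
            simp [ι₀, ← h2] at this
        · rw [List.Chain', List.isChain_cons_cons] at hchain
          obtain ⟨⟨hb2, hc2⟩, hchain'⟩ := hchain
          replace hc2 : t = s2 := hc2
          have hb2' : b2 = false := by cases b2 <;> simp_all
          subst hb2'
          have hf := hmem ⟨false, s2, t2⟩ (by simp)
          simp only [EdgeMem, if_neg Bool.false_ne_true] at hf
          obtain ⟨q', hq', h1', h2'⟩ := hf
          rcases hα q' hq' with ⟨x', y', rfl⟩ | ⟨y', x', rfl⟩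
          · -- q' = (inl x', inr y') : s2 = inl x', but s2 = t = inr (inl y)
            exfalso
            simp only [ι₁, Sum.elim_inl] at h1'
            rw [← hc2, ← h2] at h1'
            simp at h1'
          · -- q' = (inr y', inl x') : s2 = inr (inl y'), t2 = inl x'
            simp only [ι₁, Sum.elim_inl, Sum.elim_inr] at h1' h2'
            rcases L'' with _ | ⟨⟨b3, s3, t3⟩, L3⟩
            · simp only [List.getLast?_cons_cons, List.getLast?_singleton,
                Option.map_some] at hlast
              have hh := Option.some.inj hlast
              have hp2 : p.2 = Sum.inl x' := by
                rcases hp2 : p.2 with x'' | z' <;> rw [hp2] at hh <;>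
                  simp [ι₀, ← h2'] at hh ⊢ <;> simp [hh]
              exact Or.inr ⟨z, x', Prod.ext hp1 hp2⟩
            · exfalso
              rw [List.isChain_cons_cons] at hchain'
              obtain ⟨⟨hb3, hc3⟩, _⟩ := hchain'
              replace hc3 : t2 = s3 := hc3
              have hb3' : b3 = true := by cases b3 <;> simp_all
              subst hb3'
              have hg := hmem ⟨true, s3, t3⟩ (by simp)
              simp only [EdgeMem, if_pos rfl] at hg
              obtain ⟨q'', hq'', h1'', _⟩ := hg
              rw [← hc3, ← h2'] at h1''
              obtain ⟨a, b⟩ := q''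
              rcases a with y'' | z'' <;> simp [ι₂] at h1''
  · intro X _ p hp
    obtain ⟨x, h | h⟩ := hp
    · exact Or.inl ⟨x, x, h⟩
    · exact Or.inr ⟨x, x, h⟩

end PBRPaper
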